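/- Let h : ℝ → ℂ be smooth with compact support contained in (0,∞), and for z ∈ ℂ and v > 0 set ℏ_z(v) := ∫_0^∞ (h(√u)/√(2πu))·u^{z/2}·e^{iuv} du. Then for every B ∈ ℕ and every σ > 0 there exists a constant C > 0 (depending on h, B and σ) such that for all z ∈ ℂ with |Re(z)| ≤ σ and all real v ≥ 1, one has |ℏ_z(v)| ≤ C·(1 + |z|)^B·v^{−B}. -/

import Mathlib

open MeasureTheory

open Finset FourierTransform Complex in
private lemma aux_structural (φ : ℝ → ℂ) (r : ℝ → ℝ) (hφ : ContDiff ℝ (⊤:ℕ∞) φ)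
    (hφs : HasCompactSupport φ) (hr : ContDiff ℝ (⊤:ℕ∞) r) (n : ℕ) :
    ∃ g : ℕ → ℝ → ℂ, (∀ k, ContDiff ℝ (⊤:ℕ∞) (g k)) ∧ (∀ k, HasCompactSupport (g k)) ∧
      ∀ z : ℂ, ∀ u : ℝ, iteratedDeriv n (fun u => φ u * Complex.exp (z * (r u : ℂ))) u
        = ∑ k ∈ Finset.range (n+1), z^k * g k u * Complex.exp (z * (r u : ℂ)) := by
  have hzero : HasCompactSupport (0 : ℝ → ℂ) := by
    rw [HasCompactSupport, tsupport]; simp [Function.support_zero]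
  suffices H : ∃ g : ℕ → ℝ → ℂ, (∀ k, ContDiff ℝ (⊤:ℕ∞) (g k)) ∧
      (∀ k, HasCompactSupport (g k)) ∧ (∀ k, n < k → g k = 0) ∧
      ∀ z : ℂ, ∀ u : ℝ, iteratedDeriv n (fun u => φ u * Complex.exp (z * (r u : ℂ))) u
        = ∑ k ∈ Finset.range (n+1), z^k * g k u * Complex.exp (z * (r u : ℂ)) by
    obtain ⟨g, h1, h2, _, h4⟩ := H; exact ⟨g, h1, h2, h4⟩
  induction n with
  | zero =>
    refine ⟨fun k => if k = 0 then φ else 0, ?_, ?_, ?_, ?_⟩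
    · intro k; by_cases hk : k = 0 <;> simp [hk, hφ]
      · exact contDiff_const
    · intro k; by_cases hk : k = 0 <;> simp [hk, hφs, hzero]
    · intro k hk; simp [hk.ne']
    · intro z u; simp
  | succ n ih =>
    obtain ⟨g, hg, hgs, hgz, hgf⟩ := ih
    have hrd : Differentiable ℝ r := hr.differentiable (by simp)
    have hrc : ContDiff ℝ (⊤:ℕ∞) (deriv r) := (contDiff_infty_iff_deriv.1 hr).2
    have hEder : ∀ (z : ℂ) (u : ℝ), HasDerivAt (fun u : ℝ => Complex.exp (z * (r u : ℂ)))
        (Complex.exp (z * (r u : ℂ)) * (z * ((deriv r u : ℝ) : ℂ))) u := by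
      intro z u
      exact (((hrd u).hasDerivAt.ofReal_comp).const_mul z).cexp
    refine ⟨fun k u => deriv (g k) u +
        (if k = 0 then 0 else g (k-1) u * ((deriv r u : ℝ) : ℂ)), ?_, ?_, ?_, ?_⟩
    · intro k
      have h1 : ContDiff ℝ (⊤:ℕ∞) (deriv (g k)) := (contDiff_infty_iff_deriv.1 (hg k)).2
      by_cases hk : k = 0
      · simpa [hk] using h1
      · simp only [hk, if_neg]
        exact h1.add ((hg (k-1)).mul (Complex.ofRealCLM.contDiff.comp hrc))
    · intro k
      by_cases hk : k = 0
      · simpa [hk] using (hgs k).deriv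
      · simp only [hk, if_neg]
        exact ((hgs k).deriv).add ((hgs (k-1)).mul_right)
    · intro k hk
      have hk0 : k ≠ 0 := by omega
      have h1 : g k = 0 := hgz k (by omega)
      have h2 : g (k-1) = 0 := hgz (k-1) (by omega)
      funext u
      simp only [hk0, h1, h2, if_neg, Pi.zero_apply, zero_mul, add_zero]
      rw [show (0 : ℝ → ℂ) = (fun _ => (0:ℂ)) from rfl, deriv_const']
      simp
    · intro z u
      have hfun : iteratedDeriv n (fun u => φ u * Complex.exp (z * (r u : ℂ)))
          = fun u => ∑ k ∈ Finset.range (n+1), z^k * g k u * Complex.exp (z * (r u : ℂ)) :=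
        funext fun u => hgf z u
      rw [iteratedDeriv_succ, hfun]
      have hterm : ∀ k, HasDerivAt (fun u : ℝ => z^k * g k u * Complex.exp (z * (r u : ℂ)))
          (z^k * deriv (g k) u * Complex.exp (z * (r u : ℂ))
            + z^(k+1) * (g k u * ((deriv r u : ℝ) : ℂ)) * Complex.exp (z * (r u : ℂ))) u := by
        intro k
        have h1 : HasDerivAt (fun u : ℝ => z^k * g k u) (z^k * deriv (g k) u) u :=
          (((hg k).differentiable (by simp) u).hasDerivAt).const_mul (z^k)
        have := h1.mul (hEder z u)
        exact this.congr_deriv (by ring)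
      rw [deriv_fun_sum (fun k _ => (hterm k).differentiableAt)]
      have lhs_eq : ∑ k ∈ Finset.range (n+1),
            deriv (fun u : ℝ => z^k * g k u * Complex.exp (z * (r u : ℂ))) u
          = (∑ k ∈ Finset.range (n+1), z^k * deriv (g k) u * Complex.exp (z * (r u : ℂ)))
            + ∑ k ∈ Finset.range (n+1),
                z^(k+1) * (g k u * ((deriv r u : ℝ) : ℂ)) * Complex.exp (z * (r u : ℂ)) := by
        rw [← Finset.sum_add_distrib]
        exact Finset.sum_congr rfl fun k _ => (hterm k).deriv
      rw [lhs_eq]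
      have rhs_eq : ∑ k ∈ Finset.range (n+2), z^k * (deriv (g k) u +
            (if k = 0 then 0 else g (k-1) u * ((deriv r u : ℝ) : ℂ))) * Complex.exp (z * (r u : ℂ))
          = (∑ k ∈ Finset.range (n+2), z^k * deriv (g k) u * Complex.exp (z * (r u : ℂ)))
            + ∑ k ∈ Finset.range (n+2), z^k *
                (if k = 0 then 0 else g (k-1) u * ((deriv r u : ℝ) : ℂ)) * Complex.exp (z * (r u : ℂ)) := by
        rw [← Finset.sum_add_distrib]
        exact Finset.sum_congr rfl fun k _ => by ring
      rw [show n+1+1 = n+2 from rfl, rhs_eq]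
      congr 1
      · rw [eq_comm, Finset.sum_range_succ, hgz (n+1) (by omega)]
        rw [show (0 : ℝ → ℂ) = (fun _ => (0:ℂ)) from rfl, deriv_const']
        simp
      · rw [eq_comm, Finset.sum_range_succ']
        simp only [Nat.add_sub_cancel, if_neg (Nat.succ_ne_zero _), if_pos rfl]
        simp [mul_assoc, mul_comm, mul_left_comm]


/-- `ℏ_z(v) = ∫_0^∞ (h(√u)/√(2πu)) u^{z/2} e^{iuv} du`. -/
noncomputable def hbar (h : ℝ → ℂ) (z : ℂ) (v : ℝ) : ℂ :=
  ∫ u in Set.Ioi (0 : ℝ),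
    (h (Real.sqrt u) / ((Real.sqrt (2 * Real.pi * u) : ℝ) : ℂ)) * (u : ℂ) ^ (z / 2) *
      Complex.exp (Complex.I * (u : ℂ) * (v : ℂ))

open Finset FourierTransform Complex in
/-- Decay bound: `ℏ_z(v) ≪_{Re(z), B} (1 + |z|)^B v^{−B}`. -/
theorem hbar_decay (h : ℝ → ℂ) (hsm : ContDiff ℝ (⊤ : ℕ∞) h)
    (hsupp : HasCompactSupport h) (hpos : tsupport h ⊆ Set.Ioi 0) :
    ∀ B : ℕ, ∀ σ : ℝ, 0 < σ → ∃ C : ℝ, 0 < C ∧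
      ∀ z : ℂ, |z.re| ≤ σ → ∀ v : ℝ, 1 ≤ v →
        ‖hbar h z v‖ ≤ C * (1 + ‖z‖) ^ B * v ^ (-(B : ℝ)) := by
  intro B σ hσ
  obtain ⟨a, b, ha, hab, hKab⟩ : ∃ a b : ℝ, 0 < a ∧ a ≤ b ∧ tsupport h ⊆ Set.Icc a b := by
    rcases (tsupport h).eq_empty_or_nonempty with hK | hK
    · exact ⟨1, 1, one_pos, le_refl _, by simp [hK]⟩
    · have hC : IsCompact (tsupport h) := hsupp
      refine ⟨sInf (tsupport h), sSup (tsupport h), hpos (hC.sInf_mem hK), ?_, ?_⟩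
      · exact csInf_le_csSup hK hC.bddBelow hC.bddAbove
      · intro x hx; exact ⟨csInf_le hC.bddBelow hx, le_csSup hC.bddAbove hx⟩
  have ha2 : (0:ℝ) < a^2 := by positivity
  have hhz : ∀ s : ℝ, s < a → h s = 0 := fun s hs =>
    image_eq_zero_of_notMem_tsupport (fun hmem => absurd (hKab hmem).1 (not_le.2 hs))
  set φ : ℝ → ℂ := fun u => h (Real.sqrt u) / ((Real.sqrt (2 * Real.pi * u) : ℝ) : ℂ)
    with hφdef
  -- vanishing of φ below a²
  have hφ0 : ∀ u : ℝ, u < a^2 → φ u = 0 := by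
    intro u hu
    have hs : Real.sqrt u < a := by
      rcases le_or_gt u 0 with h0 | h0
      · rw [Real.sqrt_eq_zero'.2 h0]; exact ha
      · exact (Real.sqrt_lt' ha).2 hu
    simp [hφdef, hhz _ hs]
  -- support of φ
  have hsupφ : Function.support φ ⊆ Set.Icc (a^2) (b^2) := by
    intro u hu
    have h1 : h (Real.sqrt u) ≠ 0 := by
      intro h0; apply hu; simp [hφdef, h0]
    have hmem := hKab (subset_tsupport h (Function.mem_support.2 h1))
    have hu0 : 0 ≤ u := by
      by_contra h'
      rw [Real.sqrt_eq_zero'.2 (le_of_lt (not_le.1 h'))] at hmem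
      exact absurd hmem.1 (not_le.2 ha)
    constructor
    · calc a^2 ≤ (Real.sqrt u)^2 := pow_le_pow_left₀ ha.le hmem.1 2
        _ = u := Real.sq_sqrt hu0
    · calc u = (Real.sqrt u)^2 := (Real.sq_sqrt hu0).symm
        _ ≤ b^2 := pow_le_pow_left₀ (Real.sqrt_nonneg u) hmem.2 2
  have hφs : HasCompactSupport φ :=
    HasCompactSupport.intro isCompact_Icc fun x hx =>
      Function.notMem_support.1 (fun hs => hx (hsupφ hs))
  -- smoothness of φ
  have hφsm : ContDiff ℝ (⊤:ℕ∞) φ := by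
    rw [contDiff_iff_contDiffAt]
    intro x
    rcases lt_or_ge x (a^2) with hx | hx
    · exact contDiffAt_const.congr_of_eventuallyEq
        (Filter.eventuallyEq_of_mem (Iio_mem_nhds hx) fun u hu => hφ0 u hu)
    · have hx0 : (0:ℝ) < x := lt_of_lt_of_le ha2 hx
      have hnum : ContDiffAt ℝ (⊤:ℕ∞) (fun u : ℝ => h (Real.sqrt u)) x :=
        hsm.contDiffAt.comp x (Real.contDiffAt_sqrt hx0.ne')
      have hsq : ContDiffAt ℝ (⊤:ℕ∞) (fun u : ℝ => Real.sqrt (2 * Real.pi * u)) x :=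
        (Real.contDiffAt_sqrt (by positivity : (0:ℝ) < 2*Real.pi*x).ne').comp x
          (contDiff_const.mul contDiff_id).contDiffAt
      have hsq0 : Real.sqrt (2 * Real.pi * x) ≠ 0 :=
        (Real.sqrt_pos.2 (by positivity)).ne'
      have hψ : ContDiffAt ℝ (⊤:ℕ∞)
          (fun u : ℝ => h (Real.sqrt u) * (((Real.sqrt (2 * Real.pi * u))⁻¹ : ℝ) : ℂ)) x :=
        hnum.mul (Complex.ofRealCLM.contDiff.contDiffAt.comp x (hsq.inv hsq0))
      exact hψ.congr_of_eventuallyEq (Filter.Eventually.of_forall fun u => by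
        simp [hφdef, div_eq_mul_inv, Complex.ofReal_inv])
  -- bump function
  obtain ⟨χ, hrIn, hrOut⟩ : ∃ χ : ContDiffBump ((a^2+b^2)/2),
      χ.rIn = (b^2-a^2)/2 + a^2/4 ∧ χ.rOut = (b^2-a^2)/2 + a^2/2 := by
    refine ⟨⟨(b^2-a^2)/2 + a^2/4, (b^2-a^2)/2 + a^2/2, ?_, ?_⟩, rfl, rfl⟩ <;>
      nlinarith [pow_le_pow_left₀ ha.le hab 2]
  have hχ1 : ∀ u ∈ Set.Icc (a^2) (b^2), χ u = 1 := by
    intro u hu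
    apply χ.one_of_mem_closedBall
    rw [Real.closedBall_eq_Icc, Set.mem_Icc, hrIn]
    constructor
    · nlinarith [hu.1]
    · nlinarith [hu.2]
  have hχ0 : ∀ u : ℝ, u < a^2/2 → χ u = 0 := by
    intro u hu
    apply image_eq_zero_of_notMem_tsupport
    rw [χ.tsupport_eq, Real.closedBall_eq_Icc, Set.mem_Icc, hrOut]
    intro hmem
    nlinarith [hmem.1]
  set r : ℝ → ℝ := fun u => χ u * Real.log u with hrdef
  have hrsm : ContDiff ℝ (⊤:ℕ∞) r := by
    rw [contDiff_iff_contDiffAt]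
    intro x
    rcases lt_or_ge x (a^2/2) with hx | hx
    · exact (contDiffAt_const (c := (0:ℝ))).congr_of_eventuallyEq
        (Filter.eventuallyEq_of_mem (Iio_mem_nhds hx)
          fun u hu => by simp [hrdef, hχ0 u hu])
    · have hx0 : (0:ℝ) < x := lt_of_lt_of_le (by positivity) hx
      exact (χ.contDiff.contDiffAt).mul (Real.contDiffAt_log.2 hx0.ne')
  have hrs : HasCompactSupport r := by
    apply HasCompactSupport.intro χ.hasCompactSupport
    intro x hx
    simp [hrdef, image_eq_zero_of_notMem_tsupport hx]
  obtain ⟨Mr, hMr⟩ : ∃ Mr : ℝ, ∀ x, ‖r x‖ ≤ Mr :=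
    hrs.exists_bound_of_continuous hrsm.continuous
  have hMr0 : 0 ≤ Mr := le_trans (norm_nonneg _) (hMr 0)
  have hrlog : ∀ u ∈ Set.Icc (a^2) (b^2), r u = Real.log u := fun u hu => by
    rw [hrdef]; simp [hχ1 u hu]
  -- the smooth compactly supported family
  set F : ℂ → ℝ → ℂ := fun z u => φ u * Complex.exp ((z/2) * ((r u : ℝ) : ℂ)) with hFdef
  have hFsm : ∀ z, ContDiff ℝ (⊤:ℕ∞) (F z) := by
    intro z
    apply hφsm.mul
    exact ((Complex.contDiff_exp (𝕜 := ℂ)).restrict_scalars ℝ).comp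
      (contDiff_const.mul (Complex.ofRealCLM.contDiff.comp hrsm))
  -- key pointwise identity
  have hkey : ∀ (z : ℂ) (u : ℝ),
      φ u * (u:ℂ) ^ (z/2) = F z u := by
    intro z u
    by_cases hu : φ u = 0
    · simp [hFdef, hu]
    · have hmem : u ∈ Set.Icc (a^2) (b^2) := hsupφ (Function.mem_support.2 hu)
      have hu0 : (0:ℝ) < u := lt_of_lt_of_le ha2 hmem.1
      rw [hFdef]
      simp only []
      rw [hrlog u hmem, Complex.cpow_def_of_ne_zero (by exact_mod_cast hu0.ne'),
        Complex.ofReal_log hu0.le, mul_comm (Complex.log u)]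
  -- integrability of all iterated derivatives
  have hEcont : ∀ z : ℂ, Continuous (fun u : ℝ => Complex.exp ((z/2) * ((r u : ℝ) : ℂ))) := by
    intro z
    exact Complex.continuous_exp.comp (continuous_const.mul
      (Complex.continuous_ofReal.comp hrsm.continuous))
  have hint : ∀ (z : ℂ) (n : ℕ), Integrable (iteratedDeriv n (F z)) := by
    intro z n
    obtain ⟨g, hg, hgs, hgf⟩ := aux_structural φ r hφsm hφs hrsm n
    have heq : iteratedDeriv n (F z)
        = fun u => ∑ k ∈ Finset.range (n+1), (z/2)^k * g k u *
            Complex.exp ((z/2) * ((r u : ℝ) : ℂ)) := funext fun u => hgf (z/2) u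
    rw [heq]
    apply integrable_finset_sum
    intro k _
    have hcont : Continuous fun u : ℝ => (z/2)^k * g k u *
        Complex.exp ((z/2) * ((r u : ℝ) : ℂ)) :=
      (continuous_const.mul (hg k).continuous).mul (hEcont z)
    have hcs : HasCompactSupport fun u : ℝ => (z/2)^k * g k u *
        Complex.exp ((z/2) * ((r u : ℝ) : ℂ)) := by
      apply HasCompactSupport.intro (hgs k)
      intro x hx
      simp [image_eq_zero_of_notMem_tsupport hx]
    exact hcont.integrable_of_hasCompactSupport hcs
  -- fourier representation
  have hbar_eq : ∀ (z : ℂ) (v : ℝ), 1 ≤ v → hbar h z v = 𝓕 (F z) (-v / (2*Real.pi)) := by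
    intro z v hv
    have e1 : hbar h z v = ∫ u in Set.Ioi (0:ℝ),
        F z u * Complex.exp (Complex.I * u * v) := by
      rw [hbar]
      congr 1
      funext u
      rw [← hkey z u]
    have e2 : (∫ u in Set.Ioi (0:ℝ), F z u * Complex.exp (Complex.I * u * v))
        = ∫ u : ℝ, F z u * Complex.exp (Complex.I * u * v) := by
      apply setIntegral_eq_integral_of_forall_compl_eq_zero
      intro u hu
      have : φ u = 0 := hφ0 u (lt_of_le_of_lt (not_lt.1 (fun hc => hu hc)) ha2)
      simp [hFdef, this]
    rw [e1, e2, Real.fourier_real_eq_integral_exp_smul]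
    congr 1
    funext u
    have hπ : (Real.pi : ℝ) ≠ 0 := Real.pi_ne_zero
    have harg : -2 * Real.pi * u * (-v / (2*Real.pi)) = u * v := by
      field_simp
    rw [smul_eq_mul, harg, mul_comm]
    congr 1
    push_cast
    ring
  -- choose the g's for n = B once and for all
  obtain ⟨g, hg, hgs, hgf⟩ := aux_structural φ r hφsm hφs hrsm B
  set ME : ℝ := Real.exp (σ * Mr / 2) with hMEdef
  have hME0 : 0 < ME := Real.exp_pos _
  set C₀ : ℝ := ME * ∑ k ∈ Finset.range (B+1), ∫ u : ℝ, ‖g k u‖ with hC₀def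
  have hgint : ∀ k, Integrable (fun u : ℝ => ‖g k u‖) :=
    fun k => ((hg k).continuous.norm).integrable_of_hasCompactSupport (hgs k).norm
  have hC₀0 : 0 ≤ C₀ := by
    apply mul_nonneg hME0.le
    apply Finset.sum_nonneg
    intro k _
    exact integral_nonneg fun u => norm_nonneg _
  refine ⟨C₀ + 1, by positivity, ?_⟩
  intro z hz v hv
  have hv0 : (0:ℝ) < v := lt_of_lt_of_le one_pos hv
  -- bound on ‖E‖
  have hEbound : ∀ u : ℝ, ‖Complex.exp ((z/2) * ((r u : ℝ) : ℂ))‖ ≤ ME := by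
    intro u
    rw [Complex.norm_exp]
    apply Real.exp_le_exp.2
    have hre : ((z/2) * ((r u : ℝ) : ℂ)).re = z.re/2 * r u := by
      simp [Complex.mul_re, Complex.div_re]
      try ring
    rw [hre]
    calc z.re/2 * r u ≤ |z.re/2 * r u| := le_abs_self _
      _ = |z.re|/2 * |r u| := by rw [abs_mul, abs_div]; simp
      _ ≤ σ/2 * Mr := by
          apply mul_le_mul (by linarith [hz]) (by simpa using hMr u)
            (abs_nonneg _) (by positivity)
      _ = σ * Mr / 2 := by ring
  have hone : (1:ℝ) ≤ 1 + ‖z‖ := by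
    have := norm_nonneg z; linarith
  -- pointwise bound on the iterated derivative
  have hptwise : ∀ u : ℝ, ‖iteratedDeriv B (F z) u‖
      ≤ (1 + ‖z‖)^B * (ME * ∑ k ∈ Finset.range (B+1), ‖g k u‖) := by
    intro u
    rw [hgf (z/2) u]
    calc ‖∑ k ∈ Finset.range (B+1), (z/2)^k * g k u *
          Complex.exp ((z/2) * ((r u : ℝ) : ℂ))‖
        ≤ ∑ k ∈ Finset.range (B+1), ‖(z/2)^k * g k u *
          Complex.exp ((z/2) * ((r u : ℝ) : ℂ))‖ := norm_sum_le _ _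
      _ ≤ ∑ k ∈ Finset.range (B+1), (1 + ‖z‖)^B * (ME * ‖g k u‖) := by
          apply Finset.sum_le_sum
          intro k hk
          rw [norm_mul, norm_mul, norm_pow]
          have h1 : ‖(z:ℂ)/2‖ ≤ 1 + ‖z‖ := by
            rw [norm_div]
            have := norm_nonneg z
            rw [show ‖(2:ℂ)‖ = 2 by simp]
            linarith
          have h2 : ‖(z:ℂ)/2‖^k ≤ (1 + ‖z‖)^B := by
            calc ‖(z:ℂ)/2‖^k ≤ (1 + ‖z‖)^k :=
                  pow_le_pow_left₀ (norm_nonneg _) h1 k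
              _ ≤ (1 + ‖z‖)^B :=
                  pow_le_pow_right₀ hone (Nat.lt_succ_iff.1 (Finset.mem_range.1 hk))
          have hgn : (0:ℝ) ≤ ‖g k u‖ := norm_nonneg _
          have hPn : (0:ℝ) ≤ (1 + ‖z‖)^B := by positivity
          have e2 : ‖(z:ℂ)/2‖^k * ‖g k u‖ * ‖Complex.exp ((z/2) * ((r u : ℝ) : ℂ))‖
              ≤ ((1 + ‖z‖)^B * ‖g k u‖) * ME :=
            mul_le_mul (mul_le_mul_of_nonneg_right h2 hgn) (hEbound u)
              (norm_nonneg _) (mul_nonneg hPn hgn)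
          exact e2.trans (le_of_eq (by ring))
      _ = (1 + ‖z‖)^B * (ME * ∑ k ∈ Finset.range (B+1), ‖g k u‖) := by
          simp only [Finset.mul_sum]
  -- integral bound
  have hintbound : (∫ u : ℝ, ‖iteratedDeriv B (F z) u‖)
      ≤ (1 + ‖z‖)^B * C₀ := by
    have hrhsint : Integrable (fun u : ℝ =>
        (1 + ‖z‖)^B * (ME * ∑ k ∈ Finset.range (B+1), ‖g k u‖)) := by
      apply Integrable.const_mul
      apply Integrable.const_mul
      exact integrable_finset_sum _ fun k _ => hgint k
    calc (∫ u : ℝ, ‖iteratedDeriv B (F z) u‖)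
        ≤ ∫ u : ℝ, (1 + ‖z‖)^B *
            (ME * ∑ k ∈ Finset.range (B+1), ‖g k u‖) :=
          integral_mono (hint z B).norm hrhsint hptwise
      _ = (1 + ‖z‖)^B * C₀ := by
          rw [integral_const_mul, integral_const_mul, integral_finset_sum _
            fun k _ => hgint k, hC₀def]
  -- fourier inequality
  set ξ : ℝ := -v / (2*Real.pi) with hξdef
  have hfour := Real.fourier_iteratedDeriv (N := (⊤:ℕ∞)) (n := B)
    (hFsm z) (fun n _ => hint z n) le_top
  have hfourξ := congrFun hfour ξ
  have hnormF : ‖𝓕 (iteratedDeriv B (F z)) ξ‖ ≤ ∫ u : ℝ, ‖iteratedDeriv B (F z) u‖ := by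
    rw [Real.fourier_real_eq_integral_exp_smul]
    refine (norm_integral_le_integral_norm _).trans (le_of_eq ?_)
    congr with u
    simp [norm_smul, Complex.norm_exp]
  have hnorm2πξ : ‖(2 * (Real.pi:ℂ) * Complex.I * ((ξ:ℝ):ℂ))^B‖ = v^B := by
    rw [norm_pow]
    congr 1
    rw [hξdef]
    simp only [norm_mul, Complex.norm_ofNat, Complex.norm_I, Complex.norm_real, Real.norm_eq_abs, mul_one]
    rw [abs_of_pos Real.pi_pos, abs_div, abs_neg, abs_of_pos hv0,
      abs_of_pos (by positivity : (0:ℝ) < 2*Real.pi)]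
    field_simp
  have hmain : v^B * ‖𝓕 (F z) ξ‖ ≤ (1 + ‖z‖)^B * C₀ := by
    have := hnormF
    rw [hfourξ] at this
    rw [norm_smul, hnorm2πξ] at this
    exact this.trans hintbound
  have hfinal : ‖𝓕 (F z) ξ‖ ≤ (1 + ‖z‖)^B * C₀ / v^B := by
    rw [le_div_iff₀ (by positivity : (0:ℝ) < v^B)]
    linarith [hmain]
  rw [hbar_eq z v hv, ← hξdef]
  calc ‖𝓕 (F z) ξ‖ ≤ (1 + ‖z‖)^B * C₀ / v^B := hfinal
    _ ≤ (C₀ + 1) * (1 + ‖z‖)^B * v ^ (-(B:ℝ)) := by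
        rw [Real.rpow_neg hv0.le, Real.rpow_natCast, div_eq_mul_inv]
        have h1 : (1 + ‖z‖)^B * C₀ ≤ (C₀+1) * (1 + ‖z‖)^B := by
          nlinarith [pow_nonneg (by linarith : (0:ℝ) ≤ 1 + ‖z‖) B, hC₀0]
        apply mul_le_mul_of_nonneg_right h1 (by positivity)
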